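/- For n ≥ 2 let T_n be the set of maps η : {2,…,n} → ℕ with 1 ≤ η(i) ≤ i for every i, and for s = (s₁,…,s_{n−1}) ∈ [0,1]^{n−1} define f(η,s) = ∏_{i=2}^{n} ∏_{j=η(i)}^{i−1} s_j (where an empty product, occurring when η(i) = i, equals 1). Then ∑_{η ∈ T_n} ∫_{[0,1]^{n−1}} f(η,s) ds ≤ e^{n−1}. -/

import Mathlib

open scoped BigOperators
open MeasureTheory

/-- `sval n s j` is the interpolation parameter `s_j` (with `1 ≤ j ≤ n−1`, 1-based),
realized from `s : Fin (n−1) → ℝ` via `s_j = s ⟨j−1⟩`. -/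
noncomputable def sval (n : ℕ) (s : Fin (n - 1) → ℝ) (j : ℕ) : ℝ :=
  if h : j - 1 < n - 1 then s ⟨j - 1, h⟩ else 1

/-- The set `T_n` of tree functions, encoded as maps `η : Fin (n−1) → ℕ` where the value
`η k` represents `η(k+2) ∈ {1, …, k+2}` (so `i = k+2` runs over `{2, …, n}`). -/
def treeFns (n : ℕ) : Finset (Fin (n - 1) → ℕ) :=
  Fintype.piFinset fun k => Finset.Icc 1 (k.val + 2)

/-- The Brydges–Federbush tree function
`f(η,s) = ∏_{i=2}^{n} ∏_{j=η(i)}^{i−1} s_j` (empty products equal `1`). -/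
noncomputable def treeWeight (n : ℕ) (η : Fin (n - 1) → ℕ) (s : Fin (n - 1) → ℝ) : ℝ :=
  ∏ k : Fin (n - 1), ∏ j ∈ Finset.Ico (η k) (k.val + 2), sval n s j

namespace TreeEst

/-- The recursively-defined product `W x [t₁,…,t_N] = ∏ v_m` where `v₀ = x`,
`v_m = 1 + t_m v_{m-1}`. -/
noncomputable def W (x : ℝ) : List ℝ → ℝ
  | [] => 1
  | t :: l => (1 + t * x) * W (1 + t * x) l

/-- The recursion `v₀ = x`, `v_{m+1} = 1 + t_{m+1} v_m`. -/
noncomputable def vv (x : ℝ) (t : ℕ → ℝ) : ℕ → ℝ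
  | 0 => x
  | m + 1 => 1 + t (m + 1) * vv x t m

lemma sum_Icc_prod (t : ℕ → ℝ) : ∀ K : ℕ,
    ∑ a ∈ Finset.Icc 1 (K + 1), ∏ j ∈ Finset.Ico a (K + 1), t j = vv 1 t K := by
  intro K
  induction K with
  | zero => simp [vv]
  | succ K ih =>
    rw [Finset.sum_Icc_succ_top (by omega : 1 ≤ K + 1 + 1)]
    have h1 : ∀ a ∈ Finset.Icc 1 (K + 1),
        ∏ j ∈ Finset.Ico a (K + 1 + 1), t j
          = (∏ j ∈ Finset.Ico a (K + 1), t j) * t (K + 1) := by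
      intro a ha
      rw [Finset.mem_Icc] at ha
      exact Finset.prod_Ico_succ_top ha.2 t
    rw [Finset.sum_congr rfl h1, ← Finset.sum_mul, ih]
    simp only [vv, Finset.Ico_self, Finset.prod_empty]
    ring

lemma vv_shift (x : ℝ) (t : ℕ → ℝ) : ∀ m : ℕ,
    vv (vv x t 1) (fun j => t (j + 1)) m = vv x t (m + 1) := by
  intro m
  induction m with
  | zero => rfl
  | succ m ih =>
    have h : vv (vv x t 1) (fun j => t (j + 1)) (m + 1)
        = 1 + t (m + 1 + 1) * vv (vv x t 1) (fun j => t (j + 1)) m := rfl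
    rw [h, ih]
    rfl

lemma W_eq_prod : ∀ (N : ℕ) (x : ℝ) (t : ℕ → ℝ),
    W x (List.ofFn fun i : Fin N => t (i.val + 1)) = ∏ i : Fin N, vv x t (i.val + 1) := by
  intro N
  induction N with
  | zero => intro x t; simp [W]
  | succ N ih =>
    intro x t
    have hlist : (List.ofFn fun i : Fin (N + 1) => t (i.val + 1))
        = t 1 :: List.ofFn (fun i : Fin N => (fun j => t (j + 1)) (i.val + 1)) := by
      rw [List.ofFn_succ]; rfl
    rw [hlist]
    have hW : W x (t 1 :: List.ofFn (fun i : Fin N => (fun j => t (j + 1)) (i.val + 1)))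
        = (1 + t 1 * x) *
            W (1 + t 1 * x) (List.ofFn (fun i : Fin N => (fun j => t (j + 1)) (i.val + 1))) := rfl
    have hx : (1 + t 1 * x) = vv x t 1 := by simp [vv]
    rw [hW, hx, ih (vv x t 1) (fun j => t (j + 1)), Fin.prod_univ_succ]
    congr 1
    exact Finset.prod_congr rfl fun i _ => by rw [vv_shift]; simp [Fin.val_succ]

lemma contW : ∀ N : ℕ, Continuous fun p : ℝ × (Fin N → ℝ) => W p.1 (List.ofFn p.2) := by
  intro N
  induction N with
  | zero =>
    have : (fun p : ℝ × (Fin 0 → ℝ) => W p.1 (List.ofFn p.2)) = fun _ => 1 := by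
      funext p; simp [W]
    rw [this]; exact continuous_const
  | succ N ih =>
    have heq : (fun p : ℝ × (Fin (N + 1) → ℝ) => W p.1 (List.ofFn p.2))
        = fun p => (1 + p.2 0 * p.1) *
            W (1 + p.2 0 * p.1) (List.ofFn fun i : Fin N => p.2 i.succ) := by
      funext p; rw [List.ofFn_succ]; rfl
    rw [heq]
    have h1 : Continuous fun p : ℝ × (Fin (N + 1) → ℝ) => 1 + p.2 0 * p.1 := by fun_prop
    have h2 : Continuous fun p : ℝ × (Fin (N + 1) → ℝ) => (fun i : Fin N => p.2 i.succ) := by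
      fun_prop
    exact h1.mul (ih.comp (h1.prodMk h2))

/-- The product of the uniform measures on `[0,1]`. -/
noncomputable def bmeas (N : ℕ) : Measure (Fin N → ℝ) :=
  Measure.pi fun _ => volume.restrict (Set.Icc 0 1)

instance : IsProbabilityMeasure (volume.restrict (Set.Icc (0:ℝ) 1)) :=
  ⟨by simp [Real.volume_Icc]⟩

instance (N : ℕ) : IsProbabilityMeasure (bmeas N) := by
  unfold bmeas; infer_instance

lemma bmeas_eq (N : ℕ) :
    bmeas N = (volume : Measure (Fin N → ℝ)).restrict
      (Set.pi Set.univ fun _ => Set.Icc (0:ℝ) 1) := by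
  unfold bmeas
  refine Measure.pi_eq fun s hs => ?_
  rw [Measure.restrict_apply (MeasurableSet.univ_pi hs), ← Set.pi_inter_distrib, volume_pi_pi]
  exact Finset.prod_congr rfl fun i _ => (Measure.restrict_apply (hs i)).symm

lemma integrableW (x : ℝ) (N : ℕ) :
    Integrable (fun y : Fin N → ℝ => W x (List.ofFn y)) (bmeas N) := by
  rw [bmeas_eq]
  exact ContinuousOn.integrableOn_compact (isCompact_univ_pi fun _ => isCompact_Icc)
    ((contW N).comp (Continuous.prodMk_right x)).continuousOn

lemma step (N : ℕ) (x : ℝ) :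
    ∫ y, W x (List.ofFn y) ∂(bmeas (N + 1))
      = ∫ t, (∫ y, (1 + t * x) * W (1 + t * x) (List.ofFn y) ∂(bmeas N))
          ∂(volume.restrict (Set.Icc (0:ℝ) 1)) := by
  have hmp := (measurePreserving_piFinSuccAbove
    (fun _ : Fin (N + 1) => volume.restrict (Set.Icc (0:ℝ) 1)) 0).symm
  have hint : Integrable
      ((fun y : Fin (N + 1) → ℝ => W x (List.ofFn y))
        ∘ ⇑(MeasurableEquiv.piFinSuccAbove (fun _ : Fin (N + 1) => ℝ) 0).symm)
      ((volume.restrict (Set.Icc (0:ℝ) 1)).prod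
        (Measure.pi fun _ : Fin N => volume.restrict (Set.Icc (0:ℝ) 1))) :=
    (hmp.integrable_comp_emb (MeasurableEquiv.measurableEmbedding _)).mpr (integrableW x (N + 1))
  have key : ∀ p : ℝ × (Fin N → ℝ),
      W x (List.ofFn ((MeasurableEquiv.piFinSuccAbove (fun _ : Fin (N + 1) => ℝ) 0).symm p))
        = (1 + p.1 * x) * W (1 + p.1 * x) (List.ofFn p.2) := by
    intro p
    have h1 : ((MeasurableEquiv.piFinSuccAbove (fun _ : Fin (N + 1) => ℝ) 0).symm p)
        = Fin.cons p.1 p.2 := by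
      simp [MeasurableEquiv.piFinSuccAbove_symm_apply, Fin.insertNthEquiv,
        Fin.insertNth_zero]
    rw [h1, List.ofFn_succ]
    simp only [Fin.cons_zero, Fin.cons_succ]
    rfl
  calc ∫ y, W x (List.ofFn y) ∂(bmeas (N + 1))
      = ∫ p, ((fun y : Fin (N + 1) → ℝ => W x (List.ofFn y))
          ∘ ⇑(MeasurableEquiv.piFinSuccAbove (fun _ : Fin (N + 1) => ℝ) 0).symm) p
        ∂((volume.restrict (Set.Icc (0:ℝ) 1)).prod
          (Measure.pi fun _ : Fin N => volume.restrict (Set.Icc (0:ℝ) 1))) :=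
        (hmp.integral_comp' _).symm
    _ = ∫ t, (∫ y, ((fun y : Fin (N + 1) → ℝ => W x (List.ofFn y))
          ∘ ⇑(MeasurableEquiv.piFinSuccAbove (fun _ : Fin (N + 1) => ℝ) 0).symm) (t, y)
          ∂(Measure.pi fun _ : Fin N => volume.restrict (Set.Icc (0:ℝ) 1)))
        ∂(volume.restrict (Set.Icc (0:ℝ) 1)) := integral_prod _ hint
    _ = _ := by
        congr 1; funext t; congr 1; funext y; exact key (t, y)

lemma stepInt (N : ℕ) (x : ℝ) :
    Integrable (fun t : ℝ => ∫ y, (1 + t * x) * W (1 + t * x) (List.ofFn y) ∂(bmeas N))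
      (volume.restrict (Set.Icc (0:ℝ) 1)) := by
  have hmp := (measurePreserving_piFinSuccAbove
    (fun _ : Fin (N + 1) => volume.restrict (Set.Icc (0:ℝ) 1)) 0).symm
  have hint : Integrable
      ((fun y : Fin (N + 1) → ℝ => W x (List.ofFn y))
        ∘ ⇑(MeasurableEquiv.piFinSuccAbove (fun _ : Fin (N + 1) => ℝ) 0).symm)
      ((volume.restrict (Set.Icc (0:ℝ) 1)).prod
        (Measure.pi fun _ : Fin N => volume.restrict (Set.Icc (0:ℝ) 1))) :=
    (hmp.integrable_comp_emb (MeasurableEquiv.measurableEmbedding _)).mpr (integrableW x (N + 1))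
  have key : ∀ p : ℝ × (Fin N → ℝ),
      W x (List.ofFn ((MeasurableEquiv.piFinSuccAbove (fun _ : Fin (N + 1) => ℝ) 0).symm p))
        = (1 + p.1 * x) * W (1 + p.1 * x) (List.ofFn p.2) := by
    intro p
    have h1 : ((MeasurableEquiv.piFinSuccAbove (fun _ : Fin (N + 1) => ℝ) 0).symm p)
        = Fin.cons p.1 p.2 := by
      simp [MeasurableEquiv.piFinSuccAbove_symm_apply, Fin.insertNthEquiv,
        Fin.insertNth_zero]
    rw [h1, List.ofFn_succ]
    simp only [Fin.cons_zero, Fin.cons_succ]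
    rfl
  refine hint.integral_prod_left.congr (Filter.Eventually.of_forall fun t => ?_)
  exact integral_congr_ae (Filter.Eventually.of_forall fun y => key (t, y))

lemma key1 (x : ℝ) : ∫ t in Set.Icc (0:ℝ) 1, (1 + t * x) * Real.exp (t * x) = Real.exp x := by
  rw [MeasureTheory.integral_Icc_eq_integral_Ioc,
    ← intervalIntegral.integral_of_le (zero_le_one' ℝ)]
  have hderiv : ∀ t ∈ Set.uIcc (0:ℝ) 1,
      HasDerivAt (fun u : ℝ => u * Real.exp (u * x)) ((1 + t * x) * Real.exp (t * x)) t := by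
    intro t _
    have h1 : HasDerivAt (fun u : ℝ => u * x) x t := hasDerivAt_mul_const x
    have h2 : HasDerivAt (fun u : ℝ => Real.exp (u * x)) (Real.exp (t * x) * x) t := h1.exp
    have h3 := (hasDerivAt_id' t).fun_mul h2
    exact h3.congr_deriv (by ring)
  have hcont : Continuous fun t : ℝ => (1 + t * x) * Real.exp (t * x) := by fun_prop
  rw [intervalIntegral.integral_eq_sub_of_hasDerivAt hderiv (hcont.intervalIntegrable 0 1)]
  simp

lemma main (N : ℕ) : ∀ x : ℝ, 0 ≤ x →
    ∫ y, W x (List.ofFn y) ∂(bmeas (N + 1)) ≤ Real.exp (N + x) := by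
  induction N with
  | zero =>
    intro x hx
    rw [step]
    have hin : ∀ t : ℝ,
        (∫ y, (1 + t * x) * W (1 + t * x) (List.ofFn y) ∂(bmeas 0)) = 1 + t * x := by
      intro t
      simp [W, measure_univ]
    simp_rw [hin]
    have h1 : IntegrableOn (fun t : ℝ => 1 + t * x) (Set.Icc 0 1) volume :=
      (by fun_prop : Continuous fun t : ℝ => 1 + t * x).integrableOn_Icc
    have h2 : IntegrableOn (fun t : ℝ => (1 + t * x) * Real.exp (t * x)) (Set.Icc 0 1) volume :=
      (by fun_prop : Continuous fun t : ℝ => (1 + t * x) * Real.exp (t * x)).integrableOn_Icc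
    have hmono : ∀ t ∈ Set.Icc (0:ℝ) 1, 1 + t * x ≤ (1 + t * x) * Real.exp (t * x) := by
      intro t ht
      have htx : 0 ≤ t * x := mul_nonneg ht.1 hx
      nlinarith [Real.one_le_exp htx]
    calc (∫ t in Set.Icc (0:ℝ) 1, (1 + t * x))
        ≤ ∫ t in Set.Icc (0:ℝ) 1, (1 + t * x) * Real.exp (t * x) :=
          setIntegral_mono_on h1 h2 measurableSet_Icc hmono
      _ = Real.exp x := key1 x
      _ ≤ Real.exp (↑(0:ℕ) + x) := by simp
  | succ M ih =>
    intro x hx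
    rw [step]
    have hmono : ∀ t ∈ Set.Icc (0:ℝ) 1,
        (∫ y, (1 + t * x) * W (1 + t * x) (List.ofFn y) ∂(bmeas (M + 1)))
          ≤ (1 + t * x) * Real.exp (↑M + (1 + t * x)) := by
      intro t ht
      have htx : 0 ≤ t * x := mul_nonneg ht.1 hx
      have h1 : (0:ℝ) ≤ 1 + t * x := by linarith
      rw [integral_const_mul]
      exact mul_le_mul_of_nonneg_left (ih (1 + t * x) h1) h1
    have hG : IntegrableOn (fun t : ℝ => (1 + t * x) * Real.exp (↑M + (1 + t * x)))
        (Set.Icc 0 1) volume :=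
      (by fun_prop : Continuous fun t : ℝ =>
        (1 + t * x) * Real.exp (↑M + (1 + t * x))).integrableOn_Icc
    calc (∫ t in Set.Icc (0:ℝ) 1,
            ∫ y, (1 + t * x) * W (1 + t * x) (List.ofFn y) ∂(bmeas (M + 1)))
        ≤ ∫ t in Set.Icc (0:ℝ) 1, (1 + t * x) * Real.exp (↑M + (1 + t * x)) :=
          setIntegral_mono_on (stepInt (M + 1) x) hG measurableSet_Icc hmono
      _ = Real.exp (↑M + 1) * ∫ t in Set.Icc (0:ℝ) 1, (1 + t * x) * Real.exp (t * x) := by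
          rw [← integral_const_mul]
          refine integral_congr_ae (Filter.Eventually.of_forall fun t => ?_)
          show (1 + t * x) * Real.exp (↑M + (1 + t * x))
            = Real.exp (↑M + 1) * ((1 + t * x) * Real.exp (t * x))
          rw [show (M:ℝ) + (1 + t * x) = ((M:ℝ) + 1) + t * x by ring, Real.exp_add]
          ring
      _ = Real.exp ((M:ℝ) + 1 + x) := by rw [key1, ← Real.exp_add]
      _ = Real.exp (↑(M + 1) + x) := by push_cast; ring_nf

lemma main' (N : ℕ) (hN : 1 ≤ N) (x : ℝ) (hx : 0 ≤ x) :
    ∫ y, W x (List.ofFn y) ∂(bmeas N) ≤ Real.exp ((N : ℝ) - 1 + x) := by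
  obtain ⟨M, rfl⟩ : ∃ M, N = M + 1 := ⟨N - 1, by omega⟩
  calc ∫ y, W x (List.ofFn y) ∂(bmeas (M + 1)) ≤ Real.exp (↑M + x) := main M x hx
    _ = Real.exp ((↑(M + 1) : ℝ) - 1 + x) := by push_cast; ring_nf

lemma sval_eq (n : ℕ) (s : Fin (n - 1) → ℝ) :
    (fun i : Fin (n - 1) => sval n s (i.val + 1)) = s := by
  funext i
  simp only [sval, Nat.add_sub_cancel]
  rw [dif_pos i.isLt]

lemma sum_weight (n : ℕ) (s : Fin (n - 1) → ℝ) :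
    ∑ η ∈ treeFns n, treeWeight n η s = W 1 (List.ofFn s) := by
  unfold treeFns treeWeight
  have hfac : ∀ k : Fin (n - 1),
      (∑ a ∈ Finset.Icc 1 (k.val + 2), ∏ j ∈ Finset.Ico a (k.val + 2), sval n s j)
        = vv 1 (sval n s) (k.val + 1) := fun k => sum_Icc_prod (sval n s) (k.val + 1)
  calc (∑ η ∈ Fintype.piFinset fun k : Fin (n - 1) => Finset.Icc 1 (k.val + 2),
          ∏ k : Fin (n - 1), ∏ j ∈ Finset.Ico (η k) (k.val + 2), sval n s j)
      = ∏ k : Fin (n - 1),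
          ∑ a ∈ Finset.Icc 1 (k.val + 2), ∏ j ∈ Finset.Ico a (k.val + 2), sval n s j :=
        (Finset.prod_univ_sum (fun k : Fin (n - 1) => Finset.Icc 1 (k.val + 2))
          (fun k a => ∏ j ∈ Finset.Ico a (k.val + 2), sval n s j)).symm
    _ = ∏ k : Fin (n - 1), vv 1 (sval n s) (k.val + 1) :=
        Finset.prod_congr rfl fun k _ => hfac k
    _ = W 1 (List.ofFn fun i : Fin (n - 1) => sval n s (i.val + 1)) :=
        (W_eq_prod (n - 1) 1 (sval n s)).symm
    _ = W 1 (List.ofFn s) := by rw [sval_eq]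

end TreeEst

/-- The tree-function estimate of Brydges–Federbush:
`∑_{η ∈ T_n} ∫_{[0,1]^{n−1}} f(η,s) ds ≤ e^{n−1}`. -/
theorem tree_function_estimate (n : ℕ) (hn : 2 ≤ n) :
    ∑ η ∈ treeFns n,
      ∫ s in Set.pi Set.univ (fun _ : Fin (n - 1) => Set.Icc (0 : ℝ) 1),
        treeWeight n η s
      ≤ Real.exp ((n : ℝ) - 1) := by
  classical
  have hcont : ∀ η : Fin (n - 1) → ℕ, Continuous fun s => treeWeight n η s := by
    intro η
    unfold treeWeight
    refine continuous_finset_prod _ fun k _ => continuous_finset_prod _ fun j _ => ?_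
    by_cases h : j - 1 < n - 1
    · simpa [sval, h] using continuous_apply (⟨j - 1, h⟩ : Fin (n - 1))
    · simp only [sval, h, dif_neg, not_false_iff]
      exact continuous_const
  have hint : ∀ η : Fin (n - 1) → ℕ, IntegrableOn (treeWeight n η)
      (Set.pi Set.univ fun _ : Fin (n - 1) => Set.Icc (0:ℝ) 1) volume := fun η =>
    ContinuousOn.integrableOn_compact (isCompact_univ_pi fun _ => isCompact_Icc)
      (hcont η).continuousOn
  rw [← integral_finset_sum _ (fun η _ => hint η)]
  have hcongr : (∫ s in Set.pi Set.univ (fun _ : Fin (n - 1) => Set.Icc (0:ℝ) 1),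
        ∑ η ∈ treeFns n, treeWeight n η s)
      = ∫ s in Set.pi Set.univ (fun _ : Fin (n - 1) => Set.Icc (0:ℝ) 1),
        TreeEst.W 1 (List.ofFn s) :=
    integral_congr_ae (Filter.Eventually.of_forall fun s => TreeEst.sum_weight n s)
  rw [hcongr, ← TreeEst.bmeas_eq]
  have h := TreeEst.main' (n - 1) (by omega) 1 zero_le_one
  have hcast : ((n - 1 : ℕ) : ℝ) - 1 + 1 = (n : ℝ) - 1 := by
    rw [Nat.cast_sub (by omega : 1 ≤ n)]
    push_cast
    ring
  rw [hcast] at h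
  exact h
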